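/- For every continuous compactly supported u : ℝ → ℂ, the function F : {μ ∈ ℂ : Re μ < 1} → ℂ defined by F(μ) = ∫_ℝ V_μ(x)·conj(u(x)) dx is well defined (the integral converging absolutely) and holomorphic on {μ ∈ ℂ : Re μ < 1}, where V_μ(x) = e^(iπ(1+μ)/4)·π^(−1/2)·(1−x²)^(−(1+μ)/2) for |x| < 1, V_μ(x) = e^(−iπ(1+μ)/4)·π^(−1/2)·(x²−1)^(−(1+μ)/2) for |x| > 1, and V_μ(±1) = 0 (principal complex powers of positive reals). -/

import Mathlib

open MeasureTheory Complex

/-- The family of boundary-value functions `V_μ` (compact-picture realization of the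
holomorphic `H`-spherical distribution vector with `μ = conj(λ)`); principal complex
powers of positive reals. -/
noncomputable def Vmu (μ : ℂ) (x : ℝ) : ℂ :=
  if |x| < 1 then
    Complex.exp (Complex.I * Real.pi * (1 + μ) / 4) *
      (Real.pi : ℂ) ^ (-(1 / 2 : ℂ)) * ((1 - x ^ 2 : ℝ) : ℂ) ^ (-(1 + μ) / 2)
  else if 1 < |x| then
    Complex.exp (-(Complex.I * Real.pi * (1 + μ) / 4)) *
      (Real.pi : ℂ) ^ (-(1 / 2 : ℂ)) * ((x ^ 2 - 1 : ℝ) : ℂ) ^ (-(1 + μ) / 2)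
  else 0

section Aux

lemma measurable_cpow_const {f : ℝ → ℂ} (hf : Measurable f) (c : ℂ) :
    Measurable fun x => f x ^ c := by
  have h : (fun x => f x ^ c) = fun x =>
      if f x = 0 then (if c = 0 then 1 else 0) else Complex.exp (Complex.log (f x) * c) :=
    funext fun x => by rw [Complex.cpow_def]
  rw [h]
  exact Measurable.ite (hf (measurableSet_singleton 0)) measurable_const
    (Complex.measurable_exp.comp ((Complex.measurable_log.comp hf).mul_const c))

lemma measurable_Vmu (μ : ℂ) : Measurable (Vmu μ) := by
  unfold Vmu
  have h1 : MeasurableSet {x : ℝ | |x| < 1} := measurableSet_lt measurable_abs measurable_const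
  have h2 : MeasurableSet {x : ℝ | 1 < |x|} := measurableSet_lt measurable_const measurable_abs
  have hb1 : Measurable fun x : ℝ => ((1 - x ^ 2 : ℝ) : ℂ) :=
    Complex.measurable_ofReal.comp (by fun_prop)
  have hb2 : Measurable fun x : ℝ => ((x ^ 2 - 1 : ℝ) : ℂ) :=
    Complex.measurable_ofReal.comp (by fun_prop)
  exact Measurable.ite h1 ((measurable_cpow_const hb1 _).const_mul _)
    (Measurable.ite h2 ((measurable_cpow_const hb2 _).const_mul _) measurable_const)

lemma Vmu_eq_of_lt {x : ℝ} (hx : |x| < 1) (μ : ℂ) :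
    Vmu μ x = Complex.exp (Complex.I * Real.pi * (1 + μ) / 4) * (Real.pi : ℂ) ^ (-(1 / 2 : ℂ)) *
      Complex.exp ((Real.log (1 - x ^ 2) : ℂ) * (-(1 + μ) / 2)) := by
  have h0 : (0 : ℝ) < 1 - x ^ 2 := by
    have := abs_lt.mp hx; nlinarith [this.1, this.2]
  rw [Vmu, if_pos hx,
    Complex.cpow_def_of_ne_zero (x := ((1 - x ^ 2 : ℝ) : ℂ)) (by exact_mod_cast h0.ne'),
    ← Complex.ofReal_log h0.le]

lemma Vmu_eq_of_gt {x : ℝ} (hx : 1 < |x|) (μ : ℂ) :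
    Vmu μ x = Complex.exp (-(Complex.I * Real.pi * (1 + μ) / 4)) * (Real.pi : ℂ) ^ (-(1 / 2 : ℂ)) *
      Complex.exp ((Real.log (x ^ 2 - 1) : ℂ) * (-(1 + μ) / 2)) := by
  have h0 : (0 : ℝ) < x ^ 2 - 1 := by
    have h := abs_nonneg x
    nlinarith [_root_.sq_abs x]
  rw [Vmu, if_neg (by linarith : ¬ |x| < 1), if_pos hx,
    Complex.cpow_def_of_ne_zero (x := ((x ^ 2 - 1 : ℝ) : ℂ)) (by exact_mod_cast h0.ne'),
    ← Complex.ofReal_log h0.le]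

end Aux

noncomputable def Vmu' (μ : ℂ) (x : ℝ) : ℂ :=
  Vmu μ x * ((if |x| < 1 then Complex.I * Real.pi / 4 else -(Complex.I * Real.pi / 4)) -
    (Real.log (|1 - x ^ 2|) : ℂ) / 2)

lemma hasDerivAt_Vmu {x : ℝ} (hx : |x| ≠ 1) (μ : ℂ) :
    HasDerivAt (fun μ' => Vmu μ' x) (Vmu' μ x) μ := by
  rcases hx.lt_or_gt with h | h
  · have h0 : (0 : ℝ) < 1 - x ^ 2 := by
      have := abs_lt.mp h; nlinarith [this.1, this.2]
    have habs : |1 - x ^ 2| = 1 - x ^ 2 := abs_of_pos h0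
    set L : ℂ := (Real.log (1 - x ^ 2) : ℂ) with hL
    have funeq : (fun μ' => Vmu μ' x) = fun μ' =>
        Complex.exp (Complex.I * Real.pi * (1 + μ') / 4) * (Real.pi : ℂ) ^ (-(1 / 2 : ℂ)) *
          Complex.exp (L * (-(1 + μ') / 2)) := funext fun μ' => Vmu_eq_of_lt h μ'
    have d1 : HasDerivAt (fun μ' : ℂ => Complex.exp (Complex.I * Real.pi * (1 + μ') / 4))
        (Complex.exp (Complex.I * Real.pi * (1 + μ) / 4) * (Complex.I * Real.pi / 4)) μ := by
      have hinner : HasDerivAt (fun μ' : ℂ => Complex.I * Real.pi * (1 + μ') / 4)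
          (Complex.I * Real.pi / 4) μ := by
        simpa using (((hasDerivAt_id μ).const_add 1).const_mul (Complex.I * Real.pi)).div_const 4
      simpa using hinner.cexp
    have d2 : HasDerivAt (fun μ' : ℂ => Complex.exp (L * (-(1 + μ') / 2)))
        (Complex.exp (L * (-(1 + μ) / 2)) * (-(L / 2))) μ := by
      have hinner : HasDerivAt (fun μ' : ℂ => L * (-(1 + μ') / 2)) (-(L / 2)) μ := by
        have h := ((hasDerivAt_id μ).const_mul (-(L / 2))).add_const (-(L / 2))
        have heq : (fun μ' : ℂ => L * (-(1 + μ') / 2)) =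
            fun μ' : ℂ => -(L / 2) * μ' + -(L / 2) := funext fun μ' => by ring
        rw [heq]; simpa using h
      simpa using hinner.cexp
    have d3 := (d1.mul_const ((Real.pi : ℂ) ^ (-(1 / 2 : ℂ)))).mul d2
    rw [funeq]
    refine d3.congr_deriv ?_
    rw [Vmu', Vmu_eq_of_lt h, if_pos h, habs, ← hL]
    ring
  · have h0 : (0 : ℝ) < x ^ 2 - 1 := by
      have h2 := abs_nonneg x; nlinarith [_root_.sq_abs x]
    have habs : |1 - x ^ 2| = x ^ 2 - 1 := by
      rw [abs_sub_comm]; exact abs_of_pos h0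
    set L : ℂ := (Real.log (x ^ 2 - 1) : ℂ) with hL
    have funeq : (fun μ' => Vmu μ' x) = fun μ' =>
        Complex.exp (-(Complex.I * Real.pi * (1 + μ') / 4)) * (Real.pi : ℂ) ^ (-(1 / 2 : ℂ)) *
          Complex.exp (L * (-(1 + μ') / 2)) := funext fun μ' => Vmu_eq_of_gt h μ'
    have d1 : HasDerivAt (fun μ' : ℂ => Complex.exp (-(Complex.I * Real.pi * (1 + μ') / 4)))
        (Complex.exp (-(Complex.I * Real.pi * (1 + μ) / 4)) * (-(Complex.I * Real.pi / 4))) μ := by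
      have hinner : HasDerivAt (fun μ' : ℂ => -(Complex.I * Real.pi * (1 + μ') / 4))
          (-(Complex.I * Real.pi / 4)) μ := by
        simpa [Pi.neg_def] using ((((hasDerivAt_id μ).const_add 1).const_mul (Complex.I * Real.pi)).div_const
          4).neg
      simpa using hinner.cexp
    have d2 : HasDerivAt (fun μ' : ℂ => Complex.exp (L * (-(1 + μ') / 2)))
        (Complex.exp (L * (-(1 + μ) / 2)) * (-(L / 2))) μ := by
      have hinner : HasDerivAt (fun μ' : ℂ => L * (-(1 + μ') / 2)) (-(L / 2)) μ := by
        have h := ((hasDerivAt_id μ).const_mul (-(L / 2))).add_const (-(L / 2))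
        have heq : (fun μ' : ℂ => L * (-(1 + μ') / 2)) =
            fun μ' : ℂ => -(L / 2) * μ' + -(L / 2) := funext fun μ' => by ring
        rw [heq]; simpa using h
      simpa using hinner.cexp
    have d3 := (d1.mul_const ((Real.pi : ℂ) ^ (-(1 / 2 : ℂ)))).mul d2
    rw [funeq]
    refine d3.congr_deriv ?_
    rw [Vmu', Vmu_eq_of_gt h, if_neg (by linarith : ¬ |x| < 1), habs, ← hL]
    ring

lemma norm_pi_cpow_le : ‖(Real.pi : ℂ) ^ (-(1 / 2 : ℂ))‖ ≤ 1 := by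
  rw [Complex.norm_cpow_eq_rpow_re_of_pos Real.pi_pos]
  apply Real.rpow_le_one_of_one_le_of_nonpos
  · linarith [Real.pi_gt_three]
  · norm_num

lemma norm_Vmu_le (μ : ℂ) (x : ℝ) :
    ‖Vmu μ x‖ ≤ Real.exp (Real.pi * |μ.im| / 4) * |1 - x ^ 2| ^ (-(1 + μ.re) / 2) := by
  have hexpnn : (0:ℝ) < Real.exp (Real.pi * |μ.im| / 4) := Real.exp_pos _
  unfold Vmu
  split_ifs with h1 h2
  · have h0 : (0 : ℝ) < 1 - x ^ 2 := by
      have := abs_lt.mp h1; nlinarith [this.1, this.2]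
    have habs : |1 - x ^ 2| = 1 - x ^ 2 := abs_of_pos h0
    rw [norm_mul, norm_mul]
    have he : ‖Complex.exp (Complex.I * Real.pi * (1 + μ) / 4)‖ ≤
        Real.exp (Real.pi * |μ.im| / 4) := by
      rw [Complex.norm_exp]
      apply Real.exp_le_exp.mpr
      have : (Complex.I * Real.pi * (1 + μ) / 4).re = -(Real.pi * μ.im) / 4 := by
        simp [Complex.div_re, Complex.mul_re, Complex.mul_im]
        try ring
      rw [this]
      have := neg_abs_le μ.im
      have := abs_nonneg μ.im
      nlinarith [Real.pi_pos]
    have hc : ‖((1 - x ^ 2 : ℝ) : ℂ) ^ (-(1 + μ) / 2)‖ =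
        |1 - x ^ 2| ^ (-(1 + μ.re) / 2) := by
      rw [Complex.norm_cpow_eq_rpow_re_of_pos h0, habs]
      norm_num
    rw [hc]
    have hnn : (0:ℝ) ≤ |1 - x ^ 2| ^ (-(1 + μ.re) / 2) := Real.rpow_nonneg (abs_nonneg _) _
    have := mul_le_mul_of_nonneg_right
      (mul_le_mul he norm_pi_cpow_le (norm_nonneg _) hexpnn.le) hnn
    simpa using this
  · have h0 : (0 : ℝ) < x ^ 2 - 1 := by
      have h2' := abs_nonneg x; nlinarith [_root_.sq_abs x]
    have habs : |1 - x ^ 2| = x ^ 2 - 1 := by rw [abs_sub_comm]; exact abs_of_pos h0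
    rw [norm_mul, norm_mul]
    have he : ‖Complex.exp (-(Complex.I * Real.pi * (1 + μ) / 4))‖ ≤
        Real.exp (Real.pi * |μ.im| / 4) := by
      rw [Complex.norm_exp]
      apply Real.exp_le_exp.mpr
      have : (-(Complex.I * Real.pi * (1 + μ) / 4)).re = Real.pi * μ.im / 4 := by
        simp [Complex.div_re, Complex.mul_re, Complex.mul_im]
        try ring
      rw [this]
      have := le_abs_self μ.im
      nlinarith [Real.pi_pos]
    have hc : ‖((x ^ 2 - 1 : ℝ) : ℂ) ^ (-(1 + μ) / 2)‖ =
        |1 - x ^ 2| ^ (-(1 + μ.re) / 2) := by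
      rw [Complex.norm_cpow_eq_rpow_re_of_pos h0, habs]
      norm_num
    rw [hc]
    have hnn : (0:ℝ) ≤ |1 - x ^ 2| ^ (-(1 + μ.re) / 2) := Real.rpow_nonneg (abs_nonneg _) _
    have := mul_le_mul_of_nonneg_right
      (mul_le_mul he norm_pi_cpow_le (norm_nonneg _) hexpnn.le) hnn
    simpa using this
  · simp only [norm_zero]
    positivity

lemma norm_Vmu'_le (μ : ℂ) (x : ℝ) :
    ‖Vmu' μ x‖ ≤ Real.exp (Real.pi * |μ.im| / 4) *
      ((Real.pi + |Real.log (|1 - x ^ 2|)|) * |1 - x ^ 2| ^ (-(1 + μ.re) / 2)) := by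
  rw [Vmu', norm_mul]
  have h2 : ‖(if |x| < 1 then Complex.I * Real.pi / 4 else -(Complex.I * Real.pi / 4)) -
      (Real.log (|1 - x ^ 2|) : ℂ) / 2‖ ≤ Real.pi + |Real.log (|1 - x ^ 2|)| := by
    refine (norm_sub_le _ _).trans ?_
    have ha : ‖(if |x| < 1 then Complex.I * Real.pi / 4 else -(Complex.I * Real.pi / 4))‖ ≤
        Real.pi := by
      have : ‖Complex.I * (Real.pi : ℂ) / 4‖ = Real.pi / 4 := by
        simp [map_div₀,
          abs_of_pos Real.pi_pos]
      split_ifs <;> simp [this, norm_neg, abs_of_pos Real.pi_pos] <;> linarith [Real.pi_pos]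
    have hb : ‖((Real.log (|1 - x ^ 2|) : ℝ) : ℂ) / 2‖ ≤ |Real.log (|1 - x ^ 2|)| := by
      rw [norm_div, Complex.norm_real, Real.norm_eq_abs]
      simp only [RCLike.norm_ofNat]
      linarith [abs_nonneg (Real.log (|1 - x ^ 2|))]
    linarith
  calc ‖Vmu μ x‖ * ‖(if |x| < 1 then Complex.I * Real.pi / 4 else -(Complex.I * Real.pi / 4)) -
      (Real.log (|1 - x ^ 2|) : ℂ) / 2‖
      ≤ (Real.exp (Real.pi * |μ.im| / 4) * |1 - x ^ 2| ^ (-(1 + μ.re) / 2)) *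
        (Real.pi + |Real.log (|1 - x ^ 2|)|) := by
        apply mul_le_mul (norm_Vmu_le μ x) h2 (norm_nonneg _) (by positivity)
    _ = Real.exp (Real.pi * |μ.im| / 4) *
        ((Real.pi + |Real.log (|1 - x ^ 2|)|) * |1 - x ^ 2| ^ (-(1 + μ.re) / 2)) := by ring

lemma abs_rpow_intervalIntegrable {r : ℝ} (hr : -1 < r) (a b : ℝ) :
    IntervalIntegrable (fun x : ℝ => |x| ^ r) MeasureTheory.volume a b := by
  have H : ∀ c : ℝ, 0 ≤ c →
      IntervalIntegrable (fun x : ℝ => |x| ^ r) MeasureTheory.volume 0 c := by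
    intro c hc
    have h1 : IntervalIntegrable (fun x : ℝ => x ^ r) MeasureTheory.volume 0 c :=
      intervalIntegral.intervalIntegrable_rpow' hr
    rw [intervalIntegrable_iff, Set.uIoc_of_le hc] at h1 ⊢
    exact h1.congr_fun (fun x hx => by rw [abs_of_pos hx.1]) measurableSet_Ioc
  have H' : ∀ c : ℝ, IntervalIntegrable (fun x : ℝ => |x| ^ r) MeasureTheory.volume 0 c := by
    intro c
    rcases le_total 0 c with h | h
    · exact H c h
    · have := (IntervalIntegrable.iff_comp_neg (by simp)).mp (H (-c) (by linarith))
      simpa using this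
  exact (H' a).symm.trans (H' b)

lemma abs_log_le' {ρ η : ℝ} (hρ : 0 < ρ) (hη : 0 < η) :
    |Real.log ρ| ≤ (ρ ^ η + ρ ^ (-η)) / η := by
  have hnn1 : (0:ℝ) ≤ ρ ^ η := Real.rpow_nonneg hρ.le _
  have hnn2 : (0:ℝ) ≤ ρ ^ (-η) := Real.rpow_nonneg hρ.le _
  rcases abs_cases (Real.log ρ) with ⟨h1, _⟩ | ⟨h1, _⟩
  · rw [h1]
    calc Real.log ρ ≤ ρ ^ η / η := Real.log_le_rpow_div hρ.le hη
      _ ≤ (ρ ^ η + ρ ^ (-η)) / η := by gcongr; linarith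
  · rw [h1, ← Real.log_inv]
    calc Real.log ρ⁻¹ ≤ ρ⁻¹ ^ η / η := Real.log_le_rpow_div (inv_nonneg.mpr hρ.le) hη
      _ = ρ ^ (-η) / η := by rw [Real.inv_rpow hρ.le, ← Real.rpow_neg hρ.le]
      _ ≤ (ρ ^ η + ρ ^ (-η)) / η := by gcongr; linarith

lemma rpow_mem_le {ρ : ℝ} (hρ : 0 < ρ) {a b c : ℝ} (hab : a ≤ b) (hbc : b ≤ c) :
    ρ ^ b ≤ ρ ^ a + ρ ^ c := by
  rcases le_total ρ 1 with h | h
  · have h2 : ρ ^ b ≤ ρ ^ a := Real.rpow_le_rpow_of_exponent_ge hρ h hab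
    linarith [Real.rpow_nonneg hρ.le c]
  · have h2 : ρ ^ b ≤ ρ ^ c := Real.rpow_le_rpow_of_exponent_le h hbc
    linarith [Real.rpow_nonneg hρ.le a]

lemma measurable_rho_rpow (t : ℝ) : Measurable fun x : ℝ => |1 - x ^ 2| ^ t := by
  have h : (fun x : ℝ => |1 - x ^ 2| ^ t) = fun x : ℝ =>
      if |1 - x ^ 2| = 0 then (if t = 0 then 1 else 0)
      else Real.exp (Real.log (|1 - x ^ 2|) * t) :=
    funext fun x => Real.rpow_def_of_nonneg (abs_nonneg _) t
  rw [h]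
  have hm : Measurable fun x : ℝ => |1 - x ^ 2| := by fun_prop
  exact Measurable.ite (hm (measurableSet_singleton 0)) measurable_const
    (((Real.measurable_log.comp hm).mul_const t).exp)

lemma integrable_master {u : ℝ → ℂ} (hu : Continuous u) (hsupp : HasCompactSupport u)
    {t : ℝ} (ht : t < 1) :
    MeasureTheory.Integrable (fun x : ℝ => |1 - x ^ 2| ^ (-t) * ‖u x‖) := by
  rcases le_or_gt t 0 with h | h
  · have hc : Continuous fun x : ℝ => |1 - x ^ 2| ^ (-t) :=
      Continuous.rpow_const (by continuity) (fun x => Or.inr (by linarith))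
    have hcs : HasCompactSupport fun x : ℝ => |1 - x ^ 2| ^ (-t) * ‖u x‖ :=
      HasCompactSupport.mul_left (hsupp.norm)
    exact (hc.mul hu.norm).integrable_of_hasCompactSupport hcs
  · -- 0 < t < 1
    obtain ⟨R₀, hR₀⟩ := hsupp.isBounded.subset_closedBall 0
    set R := max R₀ 0 with hR
    have hRnn : (0:ℝ) ≤ R := le_max_right _ _
    have hRsupp : tsupport u ⊆ Set.Icc (-R) R := by
      refine hR₀.trans ?_
      rw [Real.closedBall_eq_Icc]
      intro y hy
      simp only [zero_sub, zero_add] at hy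
      constructor
      · exact le_trans (neg_le_neg (le_max_left _ _)) hy.1
      · exact hy.2.trans (le_max_left _ _)
    obtain ⟨M, hM⟩ := hsupp.norm.exists_bound_of_continuous hu.norm
    -- interval integrability of the shifted powers
    have hii : ∀ c : ℝ, IntervalIntegrable (fun x : ℝ => |x - c| ^ (-t))
        MeasureTheory.volume (-R) R := by
      intro c
      have h1 := (abs_rpow_intervalIntegrable (show (-1:ℝ) < -t by linarith)
        (-R - c) (R - c)).comp_sub_right c
      simpa using h1
    have hG : MeasureTheory.IntegrableOn
        (fun x : ℝ => |x - 1| ^ (-t) + |x + 1| ^ (-t)) (Set.Icc (-R) R) := by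
      have g1 := hii 1
      have g2 : IntervalIntegrable (fun x : ℝ => |x + 1| ^ (-t))
          MeasureTheory.volume (-R) R := by
        have := hii (-1); simpa [sub_neg_eq_add] using this
      have := g1.add g2
      rwa [intervalIntegrable_iff_integrableOn_Icc_of_le (by linarith)] at this
    have hGu : MeasureTheory.Integrable
        (fun x : ℝ => ‖u x‖ * (|x - 1| ^ (-t) + |x + 1| ^ (-t))) := by
      rw [← MeasureTheory.integrableOn_iff_integrable_of_support_subset
        (s := Set.Icc (-R) R) ?hsub]
      · exact hG.bdd_mul (c := M) hu.norm.aestronglyMeasurable.restrict (Filter.Eventually.of_forall fun x => by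
          simpa using hM x)
      case hsub =>
        intro x hx
        simp only [Function.mem_support] at hx
        by_contra hxmem
        have hx0 : u x = 0 := by
          have : x ∉ tsupport u := fun hmem => hxmem (hRsupp hmem)
          exact image_eq_zero_of_notMem_tsupport this
        simp [hx0] at hx
    refine hGu.mono' ?_ ?_
    · exact ((measurable_rho_rpow (-t)).aestronglyMeasurable.mul
        hu.norm.aestronglyMeasurable)
    · refine Filter.Eventually.of_forall fun x => ?_
      have hnn : (0:ℝ) ≤ |1 - x ^ 2| ^ (-t) := Real.rpow_nonneg (abs_nonneg _) _
      rw [Real.norm_eq_abs, _root_.abs_of_nonneg (mul_nonneg hnn (norm_nonneg _))]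
      have key : |1 - x ^ 2| ^ (-t) ≤ |x - 1| ^ (-t) + |x + 1| ^ (-t) := by
        have hfac : |1 - x ^ 2| = |x - 1| * |x + 1| := by
          rw [← abs_mul, abs_sub_comm]
          congr 1; ring
        rw [hfac, Real.mul_rpow (abs_nonneg _) (abs_nonneg _)]
        have hnn1 : (0:ℝ) ≤ |x - 1| ^ (-t) := Real.rpow_nonneg (abs_nonneg _) _
        have hnn2 : (0:ℝ) ≤ |x + 1| ^ (-t) := Real.rpow_nonneg (abs_nonneg _) _
        rcases le_total 0 x with hx | hx
        · have h1 : (1:ℝ) ≤ |x + 1| := by rw [_root_.abs_of_nonneg (by linarith)]; linarith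
          have : |x + 1| ^ (-t) ≤ 1 :=
            Real.rpow_le_one_of_one_le_of_nonpos h1 (by linarith)
          nlinarith
        · have h1 : (1:ℝ) ≤ |x - 1| := by rw [abs_of_nonpos (by linarith)]; linarith
          have : |x - 1| ^ (-t) ≤ 1 :=
            Real.rpow_le_one_of_one_le_of_nonpos h1 (by linarith)
          nlinarith
      calc |1 - x ^ 2| ^ (-t) * ‖u x‖ ≤ (|x - 1| ^ (-t) + |x + 1| ^ (-t)) * ‖u x‖ :=
            mul_le_mul_of_nonneg_right key (norm_nonneg _)
        _ = ‖u x‖ * (|x - 1| ^ (-t) + |x + 1| ^ (-t)) := mul_comm _ _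

lemma integrable_main {u : ℝ → ℂ} (hu : Continuous u) (hsupp : HasCompactSupport u)
    {μ : ℂ} (hμ : μ.re < 1) :
    MeasureTheory.Integrable (fun x : ℝ => Vmu μ x * (starRingEnd ℂ) (u x)) := by
  have hconj : Continuous fun x : ℝ => (starRingEnd ℂ) (u x) := by
    exact continuous_star.comp hu
  have hmeas : MeasureTheory.AEStronglyMeasurable
      (fun x : ℝ => Vmu μ x * (starRingEnd ℂ) (u x)) MeasureTheory.volume :=
    (measurable_Vmu μ).aestronglyMeasurable.mul hconj.aestronglyMeasurable
  have ht : (1 + μ.re) / 2 < 1 := by linarith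
  have hbound := (integrable_master hu hsupp ht).const_mul (Real.exp (Real.pi * |μ.im| / 4))
  refine hbound.mono' hmeas (Filter.Eventually.of_forall fun x => ?_)
  rw [norm_mul, RCLike.norm_conj]
  have h1 := norm_Vmu_le μ x
  have heq : -(1 + μ.re) / 2 = -((1 + μ.re) / 2) := by ring
  calc ‖Vmu μ x‖ * ‖u x‖
      ≤ (Real.exp (Real.pi * |μ.im| / 4) * |1 - x ^ 2| ^ (-(1 + μ.re) / 2)) * ‖u x‖ :=
        mul_le_mul_of_nonneg_right h1 (norm_nonneg _)
    _ = Real.exp (Real.pi * |μ.im| / 4) * (|1 - x ^ 2| ^ (-((1 + μ.re) / 2)) * ‖u x‖) := by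
        rw [← heq]; ring

/-- for every continuous compactly supported `u : ℝ → ℂ`, the function
`F(μ) = ∫ V_μ(x) conj(u(x)) dx` is well defined (absolute convergence) and holomorphic
on the half plane `{μ : Re μ < 1}`. -/
theorem statement3 (u : ℝ → ℂ) (hu : Continuous u) (hsupp : HasCompactSupport u) :
    (∀ μ : ℂ, μ.re < 1 → Integrable (fun x : ℝ => Vmu μ x * (starRingEnd ℂ) (u x))) ∧
    DifferentiableOn ℂ (fun μ : ℂ => ∫ x : ℝ, Vmu μ x * (starRingEnd ℂ) (u x))
      {μ : ℂ | μ.re < 1} := by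
  refine ⟨fun μ hμ => integrable_main hu hsupp hμ, ?_⟩
  intro μ₀ hμ₀
  simp only [Set.mem_setOf_eq] at hμ₀
  have hconj : Continuous fun x : ℝ => (starRingEnd ℂ) (u x) := continuous_star.comp hu
  set ε := (1 - μ₀.re) / 2 with hεdef
  have hεpos : 0 < ε := by rw [hεdef]; linarith
  have hs₁lt : (1 + μ₀.re + ε) / 2 < 1 := by rw [hεdef]; linarith
  set s₁ := (1 + μ₀.re + ε) / 2 with hs₁def
  set s₀ := (1 + μ₀.re - ε) / 2 with hs₀def
  have hs₀₁ : s₀ ≤ s₁ := by rw [hs₀def, hs₁def]; linarith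
  have hs₀lt : s₀ < 1 := lt_of_le_of_lt hs₀₁ hs₁lt
  have hηpos : 0 < (1 - s₁) / 2 := by linarith
  set η := (1 - s₁) / 2 with hηdef
  have hs₁η : s₁ + η < 1 := by rw [hηdef]; linarith
  have hs₀η : s₀ + η < 1 := by linarith
  have hs₁η' : s₁ - η < 1 := by linarith
  have hs₀η' : s₀ - η < 1 := by linarith
  set A := Real.exp (Real.pi * (|μ₀.im| + ε) / 4) with hAdef
  have hApos : 0 < A := Real.exp_pos _
  -- almost-everywhere exclusion of x = ±1
  have hae : ∀ᵐ x : ℝ, x ≠ 1 ∧ x ≠ -1 := by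
    have h1 : ∀ᵐ x : ℝ, x ≠ (1 : ℝ) := by
      refine MeasureTheory.ae_iff.mpr ?_
      have : {x : ℝ | ¬x ≠ 1} = {1} := by ext y; simp
      rw [this]; exact Real.volume_singleton
    have h2 : ∀ᵐ x : ℝ, x ≠ (-1 : ℝ) := by
      refine MeasureTheory.ae_iff.mpr ?_
      have : {x : ℝ | ¬x ≠ -1} = {-1} := by ext y; simp
      rw [this]; exact Real.volume_singleton
    exact h1.and h2
  have haux : ∀ x : ℝ, x ≠ 1 → x ≠ -1 → 0 < |1 - x ^ 2| := by
    intro x h1 h2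
    rw [abs_pos]
    intro hc
    have hfac : (1 - x) * (1 + x) = 0 := by nlinarith
    rcases mul_eq_zero.mp hfac with h | h
    · exact h1 (by linarith)
    · exact h2 (by linarith)
  have habs1 : ∀ x : ℝ, x ≠ 1 → x ≠ -1 → |x| ≠ 1 := by
    intro x h1 h2 hc
    rcases (abs_eq (le_of_lt one_pos)).mp hc with h | h
    exacts [h1 h, h2 h]
  set bound := fun x : ℝ => A * ((Real.pi + (|1 - x ^ 2| ^ η + |1 - x ^ 2| ^ (-η)) / η) *
      (|1 - x ^ 2| ^ (-s₀) + |1 - x ^ 2| ^ (-s₁))) * ‖u x‖ with hbdef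
  have key := hasDerivAt_integral_of_dominated_loc_of_deriv_le
    (F := fun μ' (x : ℝ) => Vmu μ' x * (starRingEnd ℂ) (u x))
    (F' := fun μ' (x : ℝ) => Vmu' μ' x * (starRingEnd ℂ) (u x))
    (x₀ := μ₀) (bound := bound) (Metric.ball_mem_nhds μ₀ hεpos)
    (Filter.Eventually.of_forall fun μ' =>
      (measurable_Vmu μ').aestronglyMeasurable.mul hconj.aestronglyMeasurable)
    (integrable_main hu hsupp hμ₀)
    ?hF'meas ?hbound ?hboundint ?hdiff
  · exact key.2.differentiableAt.differentiableWithinAt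
  case hF'meas =>
    have hw : Measurable fun x : ℝ =>
        (if |x| < 1 then Complex.I * Real.pi / 4 else -(Complex.I * Real.pi / 4)) -
          ((Real.log (|1 - x ^ 2|) : ℝ) : ℂ) / 2 := by
      refine Measurable.sub ?_ ?_
      · exact Measurable.ite (measurableSet_lt measurable_abs measurable_const)
          measurable_const measurable_const
      · exact (Complex.measurable_ofReal.comp (Real.measurable_log.comp (by fun_prop))).div_const 2
    have : Measurable fun x : ℝ => Vmu' μ₀ x := by
      simp only [Vmu']
      exact (measurable_Vmu μ₀).mul hw
    exact this.aestronglyMeasurable.mul hconj.aestronglyMeasurable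
  case hbound =>
    filter_upwards [hae] with x hx
    intro μ' hμ'
    have hρ : 0 < |1 - x ^ 2| := haux x hx.1 hx.2
    have hdist : ‖μ' - μ₀‖ < ε := by
      rw [← dist_eq_norm]; exact Metric.mem_ball.mp hμ'
    have hre : |μ'.re - μ₀.re| < ε := by
      have := Complex.abs_re_le_norm (μ' - μ₀)
      rw [Complex.sub_re] at this
      linarith
    have him : |μ'.im| < |μ₀.im| + ε := by
      have h1 := Complex.abs_im_le_norm (μ' - μ₀)
      rw [Complex.sub_im] at h1
      have h2 := abs_sub_abs_le_abs_sub μ'.im μ₀.im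
      linarith
    rw [norm_mul, RCLike.norm_conj]
    have h1 := norm_Vmu'_le μ' x
    have hE : Real.exp (Real.pi * |μ'.im| / 4) ≤ A := by
      rw [hAdef]
      apply Real.exp_le_exp.mpr
      have := Real.pi_pos
      nlinarith
    have hlog : |Real.log (|1 - x ^ 2|)| ≤ (|1 - x ^ 2| ^ η + |1 - x ^ 2| ^ (-η)) / η :=
      abs_log_le' hρ hηpos
    have hrpow : |1 - x ^ 2| ^ (-(1 + μ'.re) / 2) ≤
        |1 - x ^ 2| ^ (-s₁) + |1 - x ^ 2| ^ (-s₀) := by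
      refine rpow_mem_le hρ ?_ ?_
      · rw [hs₁def]; have := abs_lt.mp hre; linarith [this.1, this.2]
      · rw [hs₀def]; have := abs_lt.mp hre; linarith [this.1, this.2]
    have hXnn : (0:ℝ) ≤ (|1 - x ^ 2| ^ η + |1 - x ^ 2| ^ (-η)) / η :=
      div_nonneg (by positivity) hηpos.le
    have step1 : (Real.pi + |Real.log (|1 - x ^ 2|)|) * |1 - x ^ 2| ^ (-(1 + μ'.re) / 2) ≤
        (Real.pi + (|1 - x ^ 2| ^ η + |1 - x ^ 2| ^ (-η)) / η) *
          (|1 - x ^ 2| ^ (-s₀) + |1 - x ^ 2| ^ (-s₁)) := by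
      have t1 : Real.pi + |Real.log (|1 - x ^ 2|)| ≤
          Real.pi + (|1 - x ^ 2| ^ η + |1 - x ^ 2| ^ (-η)) / η := by linarith
      have t2 : |1 - x ^ 2| ^ (-(1 + μ'.re) / 2) ≤
          |1 - x ^ 2| ^ (-s₀) + |1 - x ^ 2| ^ (-s₁) := by
        rw [add_comm (|1 - x ^ 2| ^ (-s₀))]; exact hrpow
      exact mul_le_mul t1 t2 (Real.rpow_nonneg (abs_nonneg _) _)
        (by linarith [Real.pi_pos, abs_nonneg (Real.log (|1 - x ^ 2|))])
    have step2 : ‖Vmu' μ' x‖ ≤ A * ((Real.pi + (|1 - x ^ 2| ^ η + |1 - x ^ 2| ^ (-η)) / η) *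
        (|1 - x ^ 2| ^ (-s₀) + |1 - x ^ 2| ^ (-s₁))) := by
      refine h1.trans ?_
      refine mul_le_mul hE step1 ?_ hApos.le
      have hrnn : (0:ℝ) ≤ |1 - x ^ 2| ^ (-(1 + μ'.re) / 2) := Real.rpow_nonneg (abs_nonneg _) _
      have hpnn : (0:ℝ) ≤ Real.pi + |Real.log (|1 - x ^ 2|)| := by
        linarith [Real.pi_pos, abs_nonneg (Real.log (|1 - x ^ 2|))]
      positivity
    calc ‖Vmu' μ' x‖ * ‖u x‖
        ≤ (A * ((Real.pi + (|1 - x ^ 2| ^ η + |1 - x ^ 2| ^ (-η)) / η) *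
            (|1 - x ^ 2| ^ (-s₀) + |1 - x ^ 2| ^ (-s₁)))) * ‖u x‖ :=
          mul_le_mul_of_nonneg_right step2 (norm_nonneg _)
      _ = bound x := by rw [hbdef]
  case hboundint =>
    have hmast : ∀ t : ℝ, t < 1 →
        MeasureTheory.Integrable (fun x : ℝ => |1 - x ^ 2| ^ (-t) * ‖u x‖) :=
      fun t ht => integrable_master hu hsupp ht
    have hint : MeasureTheory.Integrable (fun x : ℝ =>
        A * Real.pi * (|1 - x ^ 2| ^ (-s₀) * ‖u x‖) +
        A * Real.pi * (|1 - x ^ 2| ^ (-s₁) * ‖u x‖) +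
        A / η * (|1 - x ^ 2| ^ (-(s₀ - η)) * ‖u x‖) +
        A / η * (|1 - x ^ 2| ^ (-(s₀ + η)) * ‖u x‖) +
        A / η * (|1 - x ^ 2| ^ (-(s₁ - η)) * ‖u x‖) +
        A / η * (|1 - x ^ 2| ^ (-(s₁ + η)) * ‖u x‖)) := by
      exact ((((((hmast s₀ hs₀lt).const_mul _).add ((hmast s₁ hs₁lt).const_mul _)).add
        ((hmast (s₀ - η) hs₀η').const_mul _)).add ((hmast (s₀ + η) hs₀η).const_mul _)).add
        ((hmast (s₁ - η) hs₁η').const_mul _)).add ((hmast (s₁ + η) hs₁η).const_mul _)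
    refine hint.congr ?_
    filter_upwards [hae] with x hx
    have hρ : 0 < |1 - x ^ 2| := haux x hx.1 hx.2
    have e1 : |1 - x ^ 2| ^ (-(s₀ - η)) = |1 - x ^ 2| ^ (-s₀) * |1 - x ^ 2| ^ η := by
      rw [← Real.rpow_add hρ]; congr 1; ring
    have e2 : |1 - x ^ 2| ^ (-(s₀ + η)) = |1 - x ^ 2| ^ (-s₀) * |1 - x ^ 2| ^ (-η) := by
      rw [← Real.rpow_add hρ]; congr 1; ring
    have e3 : |1 - x ^ 2| ^ (-(s₁ - η)) = |1 - x ^ 2| ^ (-s₁) * |1 - x ^ 2| ^ η := by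
      rw [← Real.rpow_add hρ]; congr 1; ring
    have e4 : |1 - x ^ 2| ^ (-(s₁ + η)) = |1 - x ^ 2| ^ (-s₁) * |1 - x ^ 2| ^ (-η) := by
      rw [← Real.rpow_add hρ]; congr 1; ring
    rw [hbdef]
    simp only [e1, e2, e3, e4]
    field_simp
    ring
  case hdiff =>
    filter_upwards [hae] with x hx
    intro μ' _
    exact (hasDerivAt_Vmu (habs1 x hx.1 hx.2) μ').mul_const _
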